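/- Fix integers n ≥ 1 and N ≥ 3 and R > 0. Let μ₀ be a Borel probability measure on ℝ^n absolutely continuous with respect to the Lebesgue measure, and μ := μ₀^{⊗N}. Let H be a linear subspace of L² with respect to the measure ρ (defined below), consisting of continuous functions φ : [0,∞) → ℝ supported in [0,R], such that the unit ball {φ ∈ H : ‖φ‖_{L²(ρ)} ≤ 1} is compact in the L²(ρ) norm. Assume that for every nonzero φ ∈ H there exists x in the support of μ₀ with ∫∫ φ(‖x − y‖) φ(‖x − z‖) ⟨y − x, z − x⟩ dμ₀(y) dμ₀(z) > 0. Then c_H := inf { ∫∫∫ φ(‖x − y‖) φ(‖x − z‖) ⟨y − x, z − x⟩ dμ₀(x) dμ₀(y) dμ₀(z) : φ ∈ H, ‖φ‖_{L²(ρ)} = 1 } is strictly positive, and for every φ ∈ H one has ‖f_φ‖²_{L²(μ)} ≥ ( (N−1)/N² + c_H (N−1)(N−2)/N² ) ‖φ‖²_{L²(ρ)}. -/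

import Mathlib

open MeasureTheory Finset Filter
open scoped ENNReal RealInnerProductSpace Topology

/-- The interaction velocity field `f_φ(X)_i = (1/N) ∑_{j ≠ i} φ(‖x_j − x_i‖)(x_j − x_i)`. -/
noncomputable def interactionField (n N : ℕ) (φ : ℝ → ℝ)
    (X : Fin N → EuclideanSpace ℝ (Fin n)) (i : Fin N) : EuclideanSpace ℝ (Fin n) :=
  (N : ℝ)⁻¹ • ∑ j ∈ Finset.univ.erase i, φ ‖X j - X i‖ • (X j - X i)

/-- The squared `L²(ρ)` norm
`‖φ‖²_{L²(ρ)} = (1/(N(N−1))) ∑_{i≠j} ∫ φ(‖x_i−x_j‖)² ‖x_i−x_j‖² dμ(X)`. -/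
noncomputable def rhoSqNorm (n N : ℕ) (μ : Measure (Fin N → EuclideanSpace ℝ (Fin n)))
    (φ : ℝ → ℝ) : ℝ≥0∞ :=
  ((N * (N - 1) : ℕ) : ℝ≥0∞)⁻¹ *
    ∑ i : Fin N, ∑ j ∈ Finset.univ.erase i,
      ∫⁻ X, ENNReal.ofReal ((φ ‖X i - X j‖) ^ 2 * ‖X i - X j‖ ^ 2) ∂μ

/-- The `L²(ρ)` norm itself. -/
noncomputable def rhoNorm (n N : ℕ) (μ : Measure (Fin N → EuclideanSpace ℝ (Fin n)))
    (φ : ℝ → ℝ) : ℝ :=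
  Real.sqrt (rhoSqNorm n N μ φ).toReal

/-- The triple-integral cross term
`G(φ,φ) = ∫∫∫ φ(‖x−y‖)φ(‖x−z‖)⟨y−x, z−x⟩ dμ₀(x)dμ₀(y)dμ₀(z)`. -/
noncomputable def tripleCross (n : ℕ) (μ₀ : Measure (EuclideanSpace ℝ (Fin n)))
    (φ : ℝ → ℝ) : ℝ :=
  ∫ p : EuclideanSpace ℝ (Fin n) ×
      (EuclideanSpace ℝ (Fin n) × EuclideanSpace ℝ (Fin n)),
    φ ‖p.1 - p.2.1‖ * φ ‖p.1 - p.2.2‖ * ⟪p.2.1 - p.1, p.2.2 - p.1⟫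
    ∂(μ₀.prod (μ₀.prod μ₀))

noncomputable section

section L2Helpers
variable {β : Type*} [MeasurableSpace β] {ρ : Measure β}

lemma integral_sq_eq_norm_toLp_sq {w : β → ℝ} (hw : MemLp w 2 ρ) :
    ∫ a, w a ^ 2 ∂ρ = ‖hw.toLp w‖ ^ 2 := by
  have h1 : (⟪hw.toLp w, hw.toLp w⟫) = ∫ a, ⟪(hw.toLp w : β → ℝ) a, (hw.toLp w : β → ℝ) a⟫ ∂ρ :=
    MeasureTheory.L2.inner_def _ _
  have h2 : ∫ a, ⟪(hw.toLp w : β → ℝ) a, (hw.toLp w : β → ℝ) a⟫ ∂ρ = ∫ a, w a ^ 2 ∂ρ := by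
    refine integral_congr_ae ?_
    filter_upwards [hw.coeFn_toLp] with a ha
    simp [ha, RCLike.inner_apply, sq]
  rw [← real_inner_self_eq_norm_sq, h1, h2]

lemma sqrt_integral_sq_eq {w : β → ℝ} (hw : MemLp w 2 ρ) :
    Real.sqrt (∫ a, w a ^ 2 ∂ρ) = ‖hw.toLp w‖ := by
  rw [integral_sq_eq_norm_toLp_sq hw, Real.sqrt_sq (norm_nonneg _)]

lemma integral_sq_nonneg (w : β → ℝ) : 0 ≤ ∫ a, w a ^ 2 ∂ρ :=
  integral_nonneg fun a => sq_nonneg _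

lemma abs_integral_mul_le {u v : β → ℝ} (hu : MemLp u 2 ρ) (hv : MemLp v 2 ρ) :
    |∫ a, u a * v a ∂ρ| ≤ Real.sqrt (∫ a, u a ^ 2 ∂ρ) * Real.sqrt (∫ a, v a ^ 2 ∂ρ) := by
  rw [sqrt_integral_sq_eq hu, sqrt_integral_sq_eq hv]
  have h1 : ∫ a, u a * v a ∂ρ = ⟪hu.toLp u, hv.toLp v⟫ := by
    rw [MeasureTheory.L2.inner_def]
    refine (integral_congr_ae ?_).symm
    filter_upwards [hu.coeFn_toLp, hv.coeFn_toLp] with a ha hb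
    simp [ha, hb, RCLike.inner_apply, mul_comm]
  rw [h1]
  exact abs_real_inner_le_norm _ _
lemma integrable_of_bound' {F : Type*} [NormedAddCommGroup F] [IsFiniteMeasure ρ]
    {f : β → F} (hm : AEStronglyMeasurable f ρ) (C : ℝ) (h : ∀ a, ‖f a‖ ≤ C) :
    Integrable f ρ :=
  Integrable.mono' (integrable_const C) hm (Filter.Eventually.of_forall h)

end L2Helpers
section PushForward
open MeasureTheory
variable {α : Type*} [MeasurableSpace α] (μ₀ : Measure α) [IsProbabilityMeasure μ₀]

lemma meas_restrict' {N m : ℕ} (e : Fin m → Fin N) :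
    Measurable (fun X : Fin N → α => fun a => X (e a)) :=
  measurable_pi_lambda _ fun a => measurable_pi_apply (e a)

lemma map_restrict_pi {N m : ℕ} (e : Fin m → Fin N) (he : Function.Injective e) :
    Measure.map (fun X : Fin N → α => fun a => X (e a))
        (Measure.pi fun _ : Fin N => μ₀) = Measure.pi fun _ : Fin m => μ₀ := by
  classical
  refine (Measure.pi_eq (μ := fun _ : Fin m => μ₀) fun s hs => ?_).symm
  rw [Measure.map_apply (meas_restrict' e) (MeasurableSet.univ_pi hs)]
  have hpre : (fun X : Fin N → α => fun a => X (e a)) ⁻¹' Set.pi Set.univ s =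
      Set.pi Set.univ (fun i => if h : ∃ a, e a = i then s h.choose else Set.univ) := by
    ext X
    simp only [Set.mem_preimage, Set.mem_pi, Set.mem_univ, forall_true_left]
    constructor
    · intro hX i
      by_cases h : ∃ a, e a = i
      · simp only [h, dif_pos]
        have hc := h.choose_spec
        have := hX h.choose
        rwa [hc] at this
      · simp [h]
    · intro hX a
      have h : ∃ b, e b = e a := ⟨a, rfl⟩
      have := hX (e a)
      simp only [h, dif_pos] at this
      have hb : h.choose = a := he h.choose_spec
      rwa [hb] at this
  rw [hpre, Measure.pi_pi]
  have h1 : ∀ i : Fin N, μ₀ (if h : ∃ a, e a = i then s h.choose else Set.univ) =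
      if h : ∃ a, e a = i then μ₀ (s h.choose) else 1 := by
    intro i; by_cases h : ∃ a, e a = i <;> simp [h, measure_univ]
  simp_rw [h1]
  rw [← Finset.prod_subset (Finset.subset_univ (Finset.univ.image e))
    (fun x _ hx => by
      have hne : ¬ ∃ a, e a = x := by
        simpa [Finset.mem_image] using hx
      simp [hne])]
  rw [Finset.prod_image (fun a _ b _ h => he h)]
  refine Finset.prod_congr rfl fun a _ => ?_
  have h : ∃ b, e b = e a := ⟨a, rfl⟩
  simp only [h, dif_pos]
  rw [he h.choose_spec]

lemma measurePreserving_pair' {N : ℕ} {i j : Fin N} (hij : i ≠ j) :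
    MeasurePreserving (fun X : Fin N → α => (X i, X j))
      (Measure.pi fun _ : Fin N => μ₀) (μ₀.prod μ₀) := by
  have he : Function.Injective (![i, j] : Fin 2 → Fin N) := by
    intro a b hab
    fin_cases a <;> fin_cases b <;> simp_all
  have h1 : MeasurePreserving (fun X : Fin N → α => fun a => X (![i, j] a))
      (Measure.pi fun _ : Fin N => μ₀) (Measure.pi fun _ : Fin 2 => μ₀) :=
    ⟨meas_restrict' _, map_restrict_pi μ₀ _ he⟩
  have h2 := (measurePreserving_piFinTwo (fun _ : Fin 2 => μ₀)).comp h1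
  convert h2 using 1
  rfl

lemma measurePreserving_triple' {N : ℕ} {i j k : Fin N} (hij : i ≠ j) (hik : i ≠ k)
    (hjk : j ≠ k) :
    MeasurePreserving (fun X : Fin N → α => (X i, (X j, X k)))
      (Measure.pi fun _ : Fin N => μ₀) (μ₀.prod (μ₀.prod μ₀)) := by
  have he : Function.Injective (![i, j, k] : Fin 3 → Fin N) := by
    intro a b hab
    fin_cases a <;> fin_cases b <;> simp_all
  have h1 : MeasurePreserving (fun X : Fin N → α => fun a => X (![i, j, k] a))
      (Measure.pi fun _ : Fin N => μ₀) (Measure.pi fun _ : Fin 3 => μ₀) :=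
    ⟨meas_restrict' _, map_restrict_pi μ₀ _ he⟩
  have h2 := measurePreserving_piFinSuccAbove (fun _ : Fin 3 => μ₀) 0
  have h3 := (MeasurePreserving.id μ₀).prod (measurePreserving_piFinTwo
      (fun _ : Fin 2 => μ₀))
  have h4 := (h3.comp h2).comp h1
  convert h4 using 1
  rfl

variable {β : Type*} [MeasurableSpace β] (ν : Measure β) [IsProbabilityMeasure ν]

lemma measurePreserving_fst' : MeasurePreserving (Prod.fst : α × β → α) (μ₀.prod ν) μ₀ :=
  ⟨measurable_fst, by rw [Measure.map_fst_prod, measure_univ, one_smul]⟩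

lemma measurePreserving_snd' : MeasurePreserving (Prod.snd : α × β → β) (μ₀.prod ν) ν :=
  ⟨measurable_snd, by rw [Measure.map_snd_prod, measure_univ, one_smul]⟩

end PushForward



variable {n : ℕ}

local notation "E'" => EuclideanSpace ℝ (Fin n)

/-- admissible kernels: continuous with a bound on `|φ t| * |t|`. -/
def Adm (φ : ℝ → ℝ) : Prop := Continuous φ ∧ ∃ M, 0 ≤ M ∧ ∀ t : ℝ, |φ t| * |t| ≤ M

def g2 (n : ℕ) (φ : ℝ → ℝ) : EuclideanSpace ℝ (Fin n) × EuclideanSpace ℝ (Fin n) → ℝ :=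
  fun p => φ ‖p.1 - p.2‖ * ‖p.1 - p.2‖

def E2 (n : ℕ) (μ₀ : Measure (EuclideanSpace ℝ (Fin n))) (φ : ℝ → ℝ) : ℝ :=
  ∫ p, g2 n φ p ^ 2 ∂(μ₀.prod μ₀)

variable {φ ψ χ : ℝ → ℝ} {μ₀ : Measure (EuclideanSpace ℝ (Fin n))} [IsProbabilityMeasure μ₀]

lemma Adm.g2_continuous (h : Adm φ) : Continuous (g2 n φ) := by
  have : Continuous fun p : E' × E' => ‖p.1 - p.2‖ := (continuous_fst.sub continuous_snd).norm
  exact (h.1.comp this).mul this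

lemma Adm.g2_bound (h : Adm φ) : ∀ p : E' × E', |g2 n φ p| ≤ h.2.choose := by
  intro p
  exact le_trans (le_of_eq (abs_mul _ _)) (h.2.choose_spec.2 _)

lemma Adm.memL2 (h : Adm φ) : MemLp (g2 n φ) 2 (μ₀.prod μ₀) :=
  MemLp.of_bound (h.g2_continuous.aestronglyMeasurable) h.2.choose
    (Filter.Eventually.of_forall fun p => by
      simpa [Real.norm_eq_abs] using h.g2_bound p)

lemma g2_add : g2 n (φ + ψ) = g2 n φ + g2 n ψ := by
  funext p; simp [g2, add_mul]

lemma g2_sub : g2 n (φ - ψ) = g2 n φ - g2 n ψ := by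
  funext p; simp [g2, sub_mul]

lemma g2_smul (a : ℝ) : g2 n (a • φ) = a • g2 n φ := by
  funext p; simp [g2, mul_assoc]

lemma E2_nonneg : 0 ≤ E2 n μ₀ φ := integral_sq_nonneg _

/-- `sqE` is the `L²(ρ)` seminorm. -/
def sqE (n : ℕ) (μ₀ : Measure (EuclideanSpace ℝ (Fin n))) (φ : ℝ → ℝ) : ℝ :=
  Real.sqrt (E2 n μ₀ φ)

lemma sqE_nonneg : 0 ≤ sqE n μ₀ φ := Real.sqrt_nonneg _

lemma sqE_sq (hφ : Adm φ) : sqE n μ₀ φ ^ 2 = E2 n μ₀ φ := Real.sq_sqrt E2_nonneg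

lemma sqE_eq_norm (hφ : Adm φ) :
    sqE n μ₀ φ = ‖(hφ.memL2 (μ₀ := μ₀)).toLp (g2 n φ)‖ := sqrt_integral_sq_eq _

lemma Adm.add (hφ : Adm φ) (hψ : Adm ψ) : Adm (φ + ψ) := by
  obtain ⟨Mφ, hMφ0, hMφ⟩ := hφ.2
  obtain ⟨Mψ, hMψ0, hMψ⟩ := hψ.2
  refine ⟨hφ.1.add hψ.1, Mφ + Mψ, by positivity, fun t => ?_⟩
  calc |(φ + ψ) t| * |t| ≤ (|φ t| + |ψ t|) * |t| := by
        apply mul_le_mul_of_nonneg_right (abs_add_le _ _) (abs_nonneg t)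
    _ = |φ t| * |t| + |ψ t| * |t| := by ring
    _ ≤ Mφ + Mψ := add_le_add (hMφ t) (hMψ t)

lemma Adm.smul (hφ : Adm φ) (a : ℝ) : Adm (a • φ) := by
  obtain ⟨Mφ, hMφ0, hMφ⟩ := hφ.2
  refine ⟨hφ.1.const_smul a, |a| * Mφ, by positivity, fun t => ?_⟩
  have : |(a • φ) t| * |t| = |a| * (|φ t| * |t|) := by
    simp [abs_mul, mul_assoc]
  rw [this]
  exact mul_le_mul_of_nonneg_left (hMφ t) (abs_nonneg a)

lemma Adm.sub (hφ : Adm φ) (hψ : Adm ψ) : Adm (φ - ψ) := by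
  obtain ⟨Mφ, hMφ0, hMφ⟩ := hφ.2
  obtain ⟨Mψ, hMψ0, hMψ⟩ := hψ.2
  refine ⟨hφ.1.sub hψ.1, Mφ + Mψ, by positivity, fun t => ?_⟩
  calc |(φ - ψ) t| * |t| ≤ (|φ t| + |ψ t|) * |t| := by
        apply mul_le_mul_of_nonneg_right (abs_sub _ _) (abs_nonneg t)
    _ = |φ t| * |t| + |ψ t| * |t| := by ring
    _ ≤ Mφ + Mψ := add_le_add (hMφ t) (hMψ t)

lemma sqE_add_le (hφ : Adm φ) (hψ : Adm ψ) :
    sqE n μ₀ (φ + ψ) ≤ sqE n μ₀ φ + sqE n μ₀ ψ := by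
  have e : sqE n μ₀ (φ + ψ) =
      ‖((hφ.memL2 (μ₀ := μ₀)).add (hψ.memL2 (μ₀ := μ₀))).toLp (g2 n φ + g2 n ψ)‖ := by
    rw [sqE, E2, g2_add]
    exact sqrt_integral_sq_eq _
  rw [e, MemLp.toLp_add, sqE_eq_norm hφ, sqE_eq_norm hψ]
  exact norm_add_le _ _

lemma E2_neg_symm : E2 n μ₀ (φ - ψ) = E2 n μ₀ (ψ - φ) := by
  unfold E2
  refine integral_congr_ae (Filter.Eventually.of_forall fun p => ?_)
  simp only [g2_sub, Pi.sub_apply]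
  ring

lemma sqE_sub_le (hφ : Adm φ) (hψ : Adm ψ) :
    sqE n μ₀ φ - sqE n μ₀ ψ ≤ sqE n μ₀ (φ - ψ) := by
  have h := sqE_add_le (μ₀ := μ₀) (hφ.sub hψ) hψ
  rw [sub_add_cancel] at h
  linarith

lemma abs_sqE_sub_le (hφ : Adm φ) (hψ : Adm ψ) :
    |sqE n μ₀ φ - sqE n μ₀ ψ| ≤ sqE n μ₀ (φ - ψ) := by
  rw [abs_sub_le_iff]
  refine ⟨sqE_sub_le hφ hψ, ?_⟩
  have h := sqE_sub_le (μ₀ := μ₀) hψ hφ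
  rwa [show sqE n μ₀ (ψ - φ) = sqE n μ₀ (φ - ψ) by rw [show sqE n μ₀ (ψ - φ) = Real.sqrt (E2 n μ₀ (ψ - φ)) from rfl, E2_neg_symm (φ := ψ) (ψ := φ)]; rfl] at h


lemma rhoSqNorm_eq {N : ℕ} (hN : 2 ≤ N) (hφ : Adm φ) :
    rhoSqNorm n N (Measure.pi fun _ : Fin N => μ₀) φ = ENNReal.ofReal (E2 n μ₀ φ) := by
  have hsq : Integrable (fun p => g2 n φ p ^ 2) (μ₀.prod μ₀) :=
    (hφ.memL2 (μ₀ := μ₀)).integrable_sq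
  have hof : ENNReal.ofReal (E2 n μ₀ φ) =
      ∫⁻ p, ENNReal.ofReal (g2 n φ p ^ 2) ∂(μ₀.prod μ₀) :=
    ofReal_integral_eq_lintegral_ofReal hsq (Filter.Eventually.of_forall fun p => sq_nonneg _)
  have hterm : ∀ i j : Fin N, i ≠ j →
      ∫⁻ X, ENNReal.ofReal ((φ ‖X i - X j‖) ^ 2 * ‖X i - X j‖ ^ 2)
        ∂(Measure.pi fun _ : Fin N => μ₀) = ENNReal.ofReal (E2 n μ₀ φ) := by
    intro i j hij
    rw [hof, ← (measurePreserving_pair' μ₀ hij).map_eq,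
      lintegral_map ((hφ.g2_continuous.measurable.pow_const 2).ennreal_ofReal)
        (measurable_pi_apply i |>.prodMk (measurable_pi_apply j))]
    refine lintegral_congr fun X => ?_
    simp [g2, mul_pow]
  unfold rhoSqNorm
  rw [Finset.sum_congr rfl fun i _ => Finset.sum_congr rfl fun j hj =>
    hterm i j (Finset.ne_of_mem_erase hj).symm]
  simp only [Finset.sum_const, Finset.card_erase_of_mem (Finset.mem_univ _),
    Finset.card_univ, Fintype.card_fin, smul_smul]
  rw [nsmul_eq_mul, ← mul_assoc, ENNReal.inv_mul_cancel, one_mul]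
  · exact Nat.cast_ne_zero.mpr (Nat.mul_ne_zero (by omega) (by omega))
  · exact ENNReal.natCast_ne_top _

lemma E2_eq_toReal_rhoSqNorm {N : ℕ} (hN : 2 ≤ N) (hφ : Adm φ) :
    rhoNorm n N (Measure.pi fun _ : Fin N => μ₀) φ = sqE n μ₀ φ := by
  rw [rhoNorm, rhoSqNorm_eq hN hφ, ENNReal.toReal_ofReal E2_nonneg]
  rfl

/-- the integrand of the triple cross term, with two kernels. -/
def trif (n : ℕ) (φ χ : ℝ → ℝ) :
    EuclideanSpace ℝ (Fin n) × (EuclideanSpace ℝ (Fin n) × EuclideanSpace ℝ (Fin n)) → ℝ :=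
  fun p => φ ‖p.1 - p.2.1‖ * χ ‖p.1 - p.2.2‖ * ⟪p.2.1 - p.1, p.2.2 - p.1⟫

lemma tripleCross_eq_trif :
    tripleCross n μ₀ φ = ∫ p, trif n φ φ p ∂(μ₀.prod (μ₀.prod μ₀)) := rfl

lemma trif_continuous (hφ : Continuous φ) (hχ : Continuous χ) : Continuous (trif n φ χ) := by
  have c1 : Continuous fun p : E' × (E' × E') => ‖p.1 - p.2.1‖ :=
    (continuous_fst.sub (continuous_snd.fst)).norm
  have c2 : Continuous fun p : E' × (E' × E') => ‖p.1 - p.2.2‖ :=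
    (continuous_fst.sub (continuous_snd.snd)).norm
  have c3 : Continuous fun p : E' × (E' × E') => (⟪p.2.1 - p.1, p.2.2 - p.1⟫ : ℝ) :=
    (continuous_snd.fst.sub continuous_fst).inner (continuous_snd.snd.sub continuous_fst)
  exact ((hφ.comp c1).mul (hχ.comp c2)).mul c3

lemma trif_abs_le (p : E' × (E' × E')) :
    |trif n φ χ p| ≤ |g2 n φ (p.1, p.2.1)| * |g2 n χ (p.1, p.2.2)| := by
  obtain ⟨x, y, z⟩ := p
  simp only [trif, g2, abs_mul]
  have hip : |(⟪y - x, z - x⟫ : ℝ)| ≤ ‖x - y‖ * ‖x - z‖ := by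
    rw [norm_sub_rev x y, norm_sub_rev x z]
    exact abs_real_inner_le_norm _ _
  have h1 : (0 : ℝ) ≤ |φ ‖x - y‖| * |χ ‖x - z‖| := by positivity
  calc |φ ‖x - y‖| * |χ ‖x - z‖| * |(⟪y - x, z - x⟫ : ℝ)|
      ≤ |φ ‖x - y‖| * |χ ‖x - z‖| * (‖x - y‖ * ‖x - z‖) :=
        mul_le_mul_of_nonneg_left hip h1
    _ = |φ ‖x - y‖| * |‖x - y‖| * (|χ ‖x - z‖| * |‖x - z‖|) := by
        rw [abs_norm, abs_norm]; ring
    _ = _ := rfl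

lemma trif_bound (hφ : Adm φ) (hχ : Adm χ) (p : E' × (E' × E')) :
    |trif n φ χ p| ≤ hφ.2.choose * hχ.2.choose := by
  refine (trif_abs_le p).trans ?_
  have h1 := hφ.g2_bound (n := n) (p.1, p.2.1)
  have h2 := hχ.g2_bound (n := n) (p.1, p.2.2)
  have h3 : (0:ℝ) ≤ |g2 n φ (p.1, p.2.1)| := abs_nonneg _
  have h4 : (0:ℝ) ≤ |g2 n χ (p.1, p.2.2)| := abs_nonneg _
  exact mul_le_mul h1 h2 h4 (h3.trans h1)

lemma trif_integrable (hφ : Adm φ) (hχ : Adm χ) :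
    Integrable (trif n φ χ) (μ₀.prod (μ₀.prod μ₀)) :=
  integrable_of_bound' ((trif_continuous hφ.1 hχ.1).aestronglyMeasurable) _
    (fun p => by simpa [Real.norm_eq_abs] using trif_bound hφ hχ p)

/-- the bilinear cross term. -/
def Bil (n : ℕ) (μ₀ : Measure (EuclideanSpace ℝ (Fin n))) (φ χ : ℝ → ℝ) : ℝ :=
  ∫ p, trif n φ χ p ∂(μ₀.prod (μ₀.prod μ₀))

lemma abs_Bil_le (hφ : Adm φ) (hχ : Adm χ) :
    |Bil n μ₀ φ χ| ≤ sqE n μ₀ φ * sqE n μ₀ χ := by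
  set ρ := μ₀.prod (μ₀.prod μ₀) with hρ
  set U : E' × (E' × E') → ℝ := fun p => g2 n φ (p.1, p.2.1) with hU
  set V : E' × (E' × E') → ℝ := fun p => g2 n χ (p.1, p.2.2) with hV
  have hUc : Continuous U := hφ.g2_continuous.comp (continuous_fst.prodMk continuous_snd.fst)
  have hVc : Continuous V := hχ.g2_continuous.comp (continuous_fst.prodMk continuous_snd.snd)
  have hUm : MemLp U 2 ρ := MemLp.of_bound hUc.aestronglyMeasurable hφ.2.choose
    (Filter.Eventually.of_forall fun p => by
      simpa [Real.norm_eq_abs] using hφ.g2_bound (n := n) (p.1, p.2.1))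
  have hVm : MemLp V 2 ρ := MemLp.of_bound hVc.aestronglyMeasurable hχ.2.choose
    (Filter.Eventually.of_forall fun p => by
      simpa [Real.norm_eq_abs] using hχ.g2_bound (n := n) (p.1, p.2.2))
  -- pushforward identities
  have hTU : MeasurePreserving (fun p : E' × (E' × E') => (p.1, p.2.1)) ρ (μ₀.prod μ₀) := by
    exact (MeasurePreserving.id μ₀).prod (measurePreserving_fst' μ₀ μ₀)
  have hTV : MeasurePreserving (fun p : E' × (E' × E') => (p.1, p.2.2)) ρ (μ₀.prod μ₀) := by
    exact (MeasurePreserving.id μ₀).prod (measurePreserving_snd' μ₀ μ₀)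
  have hIU : ∫ p, U p ^ 2 ∂ρ = E2 n μ₀ φ := by
    rw [E2, ← hTU.map_eq, integral_map (f := fun p => g2 n φ p ^ 2) hTU.aemeasurable
      ((hφ.g2_continuous.pow 2).aestronglyMeasurable)]
  have hIV : ∫ p, V p ^ 2 ∂ρ = E2 n μ₀ χ := by
    rw [E2, ← hTV.map_eq, integral_map (f := fun p => g2 n χ p ^ 2) hTV.aemeasurable
      ((hχ.g2_continuous.pow 2).aestronglyMeasurable)]
  have habs : ∀ p, |trif n φ χ p| ≤ |U p| * |V p| := trif_abs_le
  have hint1 : Integrable (fun p => |U p| * |V p|) ρ :=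
    integrable_of_bound' ((hUc.abs.mul hVc.abs).aestronglyMeasurable)
      (hφ.2.choose * hχ.2.choose) (fun p => by
        rw [Real.norm_eq_abs, abs_of_nonneg (by positivity)]
        have h1 := hφ.g2_bound (n := n) (p.1, p.2.1)
        have h2 := hχ.g2_bound (n := n) (p.1, p.2.2)
        exact mul_le_mul h1 h2 (abs_nonneg _) ((abs_nonneg _).trans h1))
  calc |Bil n μ₀ φ χ| ≤ ∫ p, |trif n φ χ p| ∂ρ := by
        simpa [Real.norm_eq_abs, Bil] using
          norm_integral_le_integral_norm (μ := ρ) (trif n φ χ)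
    _ ≤ ∫ p, |U p| * |V p| ∂ρ :=
        integral_mono ((trif_integrable hφ hχ).abs) hint1 habs
    _ ≤ |∫ p, |U p| * |V p| ∂ρ| := le_abs_self _
    _ ≤ Real.sqrt (∫ p, |U p| ^ 2 ∂ρ) * Real.sqrt (∫ p, |V p| ^ 2 ∂ρ) :=
        abs_integral_mul_le hUm.abs hVm.abs
    _ = sqE n μ₀ φ * sqE n μ₀ χ := by
        simp only [sq_abs]
        rw [hIU, hIV]; rfl

lemma tripleCross_sub_eq (hφ : Adm φ) (hψ : Adm ψ) :
    tripleCross n μ₀ φ - tripleCross n μ₀ ψ = Bil n μ₀ (φ - ψ) φ + Bil n μ₀ ψ (φ - ψ) := by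
  have h1 : Bil n μ₀ (φ - ψ) φ = Bil n μ₀ φ φ - Bil n μ₀ ψ φ := by
    rw [Bil, Bil, Bil, ← integral_sub (trif_integrable hφ hφ) (trif_integrable hψ hφ)]
    refine integral_congr_ae (Filter.Eventually.of_forall fun p => ?_)
    simp only [trif, Pi.sub_apply]; ring
  have h2 : Bil n μ₀ ψ (φ - ψ) = Bil n μ₀ ψ φ - Bil n μ₀ ψ ψ := by
    rw [Bil, Bil, Bil, ← integral_sub (trif_integrable hψ hφ) (trif_integrable hψ hψ)]
    refine integral_congr_ae (Filter.Eventually.of_forall fun p => ?_)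
    simp only [trif, Pi.sub_apply]; ring
  rw [h1, h2, tripleCross_eq_trif, tripleCross_eq_trif]
  show Bil n μ₀ φ φ - Bil n μ₀ ψ ψ = _
  ring

lemma tripleCross_diff_bound (hφ : Adm φ) (hψ : Adm ψ) :
    |tripleCross n μ₀ φ - tripleCross n μ₀ ψ| ≤
      sqE n μ₀ (φ - ψ) * (sqE n μ₀ φ + sqE n μ₀ ψ) := by
  rw [tripleCross_sub_eq hφ hψ]
  calc |Bil n μ₀ (φ - ψ) φ + Bil n μ₀ ψ (φ - ψ)|
      ≤ |Bil n μ₀ (φ - ψ) φ| + |Bil n μ₀ ψ (φ - ψ)| := abs_add_le _ _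
    _ ≤ sqE n μ₀ (φ - ψ) * sqE n μ₀ φ + sqE n μ₀ ψ * sqE n μ₀ (φ - ψ) :=
        add_le_add (abs_Bil_le (hφ.sub hψ) hφ) (abs_Bil_le hψ (hφ.sub hψ))
    _ = sqE n μ₀ (φ - ψ) * (sqE n μ₀ φ + sqE n μ₀ ψ) := by ring

lemma abs_tripleCross_le (hφ : Adm φ) : |tripleCross n μ₀ φ| ≤ E2 n μ₀ φ := by
  have h := abs_Bil_le (μ₀ := μ₀) hφ hφ
  have he : sqE n μ₀ φ * sqE n μ₀ φ = E2 n μ₀ φ := by rw [← sq, sqE_sq hφ]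
  rw [he] at h
  exact h

lemma E2_smul (a : ℝ) : E2 n μ₀ (a • φ) = a ^ 2 * E2 n μ₀ φ := by
  unfold E2
  rw [g2_smul, show (a ^ 2 * ∫ p, g2 n φ p ^ 2 ∂(μ₀.prod μ₀)) =
    (a ^ 2) • ∫ p, g2 n φ p ^ 2 ∂(μ₀.prod μ₀) from rfl, ← integral_smul]
  refine integral_congr_ae (Filter.Eventually.of_forall fun p => ?_)
  simp only [Pi.smul_apply, smul_eq_mul, mul_pow]

lemma sqE_smul (a : ℝ) : sqE n μ₀ (a • φ) = |a| * sqE n μ₀ φ := by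
  rw [sqE, E2_smul, Real.sqrt_mul (sq_nonneg a), Real.sqrt_sq_eq_abs]
  rfl

lemma tripleCross_smul (a : ℝ) : tripleCross n μ₀ (a • φ) = a ^ 2 * tripleCross n μ₀ φ := by
  rw [tripleCross_eq_trif, tripleCross_eq_trif,
    show (a ^ 2 * ∫ p, trif n φ φ p ∂(μ₀.prod (μ₀.prod μ₀))) =
      (a ^ 2) • ∫ p, trif n φ φ p ∂(μ₀.prod (μ₀.prod μ₀)) from rfl, ← integral_smul]
  refine integral_congr_ae (Filter.Eventually.of_forall fun p => ?_)
  simp only [trif, Pi.smul_apply, smul_eq_mul]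
  ring

/-- the conditional cross term. -/
def Kf (n : ℕ) (μ₀ : Measure (EuclideanSpace ℝ (Fin n))) (φ : ℝ → ℝ)
    (x : EuclideanSpace ℝ (Fin n)) : ℝ :=
  ∫ p : EuclideanSpace ℝ (Fin n) × EuclideanSpace ℝ (Fin n),
    φ ‖x - p.1‖ * φ ‖x - p.2‖ * ⟪p.1 - x, p.2 - x⟫ ∂(μ₀.prod μ₀)

lemma tripleCross_eq_integral_Kf (hφ : Adm φ) :
    tripleCross n μ₀ φ = ∫ x, Kf n μ₀ φ x ∂μ₀ := by
  rw [tripleCross_eq_trif, integral_prod _ (trif_integrable hφ hφ)]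
  rfl

lemma Kf_eq_norm_sq (hφ : Adm φ) (x : E') :
    Kf n μ₀ φ x = ‖∫ y, φ ‖x - y‖ • (y - x) ∂μ₀‖ ^ 2 := by
  set h : E' → E' := fun y => φ ‖x - y‖ • (y - x) with hh
  have hc : Continuous h := by
    have : Continuous fun y : E' => ‖x - y‖ := (continuous_const.sub continuous_id).norm
    exact ((hφ.1.comp this)).smul (continuous_id.sub continuous_const)
  have hb : ∀ y, ‖h y‖ ≤ hφ.2.choose := by
    intro y
    rw [hh]
    simp only [norm_smul, Real.norm_eq_abs]
    calc |φ ‖x - y‖| * ‖y - x‖ = |φ ‖x - y‖| * |‖x - y‖| := by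
          rw [norm_sub_rev y x, abs_norm]
      _ ≤ _ := hφ.2.choose_spec.2 _
  have hint : Integrable h μ₀ := integrable_of_bound' hc.aestronglyMeasurable _ hb
  have h1 : Kf n μ₀ φ x = ∫ p : E' × E', ⟪h p.1, h p.2⟫ ∂(μ₀.prod μ₀) := by
    refine integral_congr_ae (Filter.Eventually.of_forall fun p => ?_)
    rw [hh]
    simp only [real_inner_smul_left, real_inner_smul_right]
    ring
  have hinner_int : Integrable (fun p : E' × E' => (⟪h p.1, h p.2⟫ : ℝ)) (μ₀.prod μ₀) := by
    refine integrable_of_bound' ?_ (hφ.2.choose * hφ.2.choose) (fun p => ?_)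
    · exact ((hc.comp continuous_fst).inner (hc.comp continuous_snd)).aestronglyMeasurable
    · rw [Real.norm_eq_abs]
      have h1 := hb p.1
      have h2 := hb p.2
      exact (abs_real_inner_le_norm _ _).trans
        (mul_le_mul h1 h2 (norm_nonneg _) ((norm_nonneg _).trans h1))
  rw [h1, integral_prod _ hinner_int]
  have h2 : ∀ y, ∫ z, (⟪h y, h z⟫ : ℝ) ∂μ₀ = ⟪h y, ∫ z, h z ∂μ₀⟫ := fun y =>
    integral_inner hint _
  simp_rw [h2]
  have h3 : ∫ y, (⟪h y, ∫ z, h z ∂μ₀⟫ : ℝ) ∂μ₀ = ⟪∫ y, h y ∂μ₀, ∫ z, h z ∂μ₀⟫ := by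
    have h4 := integral_inner (𝕜 := ℝ) hint (∫ z, h z ∂μ₀)
    rw [real_inner_comm (∫ y, h y ∂μ₀) (∫ z, h z ∂μ₀), ← h4]
    exact integral_congr_ae (Filter.Eventually.of_forall fun y => real_inner_comm _ _)
  rw [h3, real_inner_self_eq_norm_sq]

lemma Kf_nonneg (hφ : Adm φ) (x : E') : 0 ≤ Kf n μ₀ φ x := by
  rw [Kf_eq_norm_sq hφ]; positivity

lemma tripleCross_nonneg (hφ : Adm φ) : 0 ≤ tripleCross n μ₀ φ := by
  rw [tripleCross_eq_integral_Kf hφ]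
  exact integral_nonneg (Kf_nonneg hφ)

lemma Kf_eq_trif (x : E') :
    Kf n μ₀ φ x = ∫ p, trif n φ φ (x, p) ∂(μ₀.prod μ₀) := rfl

lemma Kf_bound (hφ : Adm φ) (x : E') : |Kf n μ₀ φ x| ≤ hφ.2.choose * hφ.2.choose := by
  rw [Kf_eq_trif, ← Real.norm_eq_abs]
  have := norm_integral_le_of_norm_le (μ := μ₀.prod μ₀)
    (f := fun p => trif n φ φ (x, p))
    (integrable_const (hφ.2.choose * hφ.2.choose))
    (Filter.Eventually.of_forall fun p => by
      simpa [Real.norm_eq_abs] using trif_bound hφ hφ (x, p))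
  simpa [measure_univ] using this

lemma Kf_continuous (hφ : Adm φ) : Continuous (Kf n μ₀ φ) := by
  have := continuous_of_dominated (μ := μ₀.prod μ₀)
    (F := fun (x : E') (p : E' × E') => trif n φ φ (x, p))
    (bound := fun _ => hφ.2.choose * hφ.2.choose)
    (fun x => ((trif_continuous hφ.1 hφ.1).comp (Continuous.prodMk_right x)).aestronglyMeasurable)
    (fun x => Filter.Eventually.of_forall fun p => by
      simpa [Real.norm_eq_abs] using trif_bound hφ hφ (x, p))
    (integrable_const _)
    (Filter.Eventually.of_forall fun p =>
      (trif_continuous hφ.1 hφ.1).comp (continuous_id.prodMk continuous_const))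
  exact this

lemma Kf_integrable (hφ : Adm φ) : Integrable (Kf n μ₀ φ) μ₀ :=
  integrable_of_bound' (Kf_continuous hφ).aestronglyMeasurable _
    (fun x => by simpa [Real.norm_eq_abs] using Kf_bound hφ x)

lemma tripleCross_pos (hφ : Adm φ) (x₀ : E') (hx : ∀ U ∈ nhds x₀, 0 < μ₀ U)
    (hK : 0 < Kf n μ₀ φ x₀) : 0 < tripleCross n μ₀ φ := by
  rw [tripleCross_eq_integral_Kf hφ]
  set U : Set E' := Kf n μ₀ φ ⁻¹' Set.Ioi (Kf n μ₀ φ x₀ / 2) with hUdef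
  have hUopen : IsOpen U := (isOpen_Ioi).preimage (Kf_continuous hφ)
  have hx₀U : x₀ ∈ U := by
    simp only [hUdef, Set.mem_preimage, Set.mem_Ioi]
    linarith
  have hUpos : 0 < μ₀ U := hx U (hUopen.mem_nhds hx₀U)
  have hUmeas : MeasurableSet U := hUopen.measurableSet
  have h1 : Kf n μ₀ φ x₀ / 2 * (μ₀ U).toReal ≤ ∫ x in U, Kf n μ₀ φ x ∂μ₀ :=
    by have := setIntegral_ge_of_const_le hUmeas (measure_ne_top _ _)
         (fun x hx => le_of_lt hx) ((Kf_integrable hφ).integrableOn)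
       rw [smul_eq_mul, mul_comm] at this; exact this
  have h2 : ∫ x in U, Kf n μ₀ φ x ∂μ₀ ≤ ∫ x, Kf n μ₀ φ x ∂μ₀ :=
    setIntegral_le_integral (Kf_integrable hφ) (Filter.Eventually.of_forall (Kf_nonneg hφ))
  have h3 : 0 < Kf n μ₀ φ x₀ / 2 * (μ₀ U).toReal := by
    apply mul_pos (by linarith)
    exact ENNReal.toReal_pos hUpos.ne' (measure_ne_top _ _)
  linarith

lemma interactionField_sq_expand {N : ℕ} (X : Fin N → E') (i : Fin N) :
    ‖interactionField n N φ X i‖ ^ 2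
      = ((N : ℝ)⁻¹) ^ 2 * ∑ j ∈ Finset.univ.erase i, ∑ k ∈ Finset.univ.erase i,
          trif n φ φ (X i, (X j, X k)) := by
  rw [interactionField, norm_smul, mul_pow, Real.norm_eq_abs, abs_of_nonneg (by positivity),
    ← real_inner_self_eq_norm_sq, sum_inner]
  congr 1
  refine Finset.sum_congr rfl fun j hj => ?_
  rw [inner_sum]
  refine Finset.sum_congr rfl fun k hk => ?_
  rw [real_inner_smul_left, real_inner_smul_right, trif]
  simp only
  rw [norm_sub_rev (X i) (X j), norm_sub_rev (X i) (X k)]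
  ring

lemma trif_term_integrable {N : ℕ} (hφ : Adm φ) (i j k : Fin N) :
    Integrable (fun X : Fin N → E' => trif n φ φ (X i, (X j, X k)))
      (Measure.pi fun _ : Fin N => μ₀) := by
  refine integrable_of_bound' ?_ (hφ.2.choose * hφ.2.choose) (fun X => by
    simpa [Real.norm_eq_abs] using trif_bound hφ hφ (X i, (X j, X k)))
  exact ((trif_continuous hφ.1 hφ.1).comp ((continuous_apply i).prodMk
    ((continuous_apply j).prodMk (continuous_apply k)))).aestronglyMeasurable

lemma trif_diag_integral {N : ℕ} (hφ : Adm φ) {i j : Fin N} (hij : i ≠ j) :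
    ∫ X, trif n φ φ (X i, (X j, X j)) ∂(Measure.pi fun _ : Fin N => μ₀) = E2 n μ₀ φ := by
  have hpt : ∀ X : Fin N → E', trif n φ φ (X i, (X j, X j)) = g2 n φ (X i, X j) ^ 2 := by
    intro X
    rw [trif, g2]
    simp only
    rw [real_inner_self_eq_norm_sq, norm_sub_rev (X j) (X i)]
    ring
  simp_rw [hpt]
  rw [E2, ← (measurePreserving_pair' μ₀ hij).map_eq, integral_map (f := fun p => g2 n φ p ^ 2)
    (measurePreserving_pair' μ₀ hij).aemeasurable
    ((hφ.g2_continuous.pow 2).aestronglyMeasurable)]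

lemma trif_off_integral {N : ℕ} (hφ : Adm φ) {i j k : Fin N} (hij : i ≠ j) (hik : i ≠ k)
    (hjk : j ≠ k) :
    ∫ X, trif n φ φ (X i, (X j, X k)) ∂(Measure.pi fun _ : Fin N => μ₀)
      = tripleCross n μ₀ φ := by
  rw [tripleCross_eq_trif, ← (measurePreserving_triple' μ₀ hij hik hjk).map_eq, integral_map
    (measurePreserving_triple' μ₀ hij hik hjk).aemeasurable
    ((trif_continuous hφ.1 hφ.1).aestronglyMeasurable)]

lemma lint_expansion {N : ℕ} (hN : 3 ≤ N) (hφ : Adm φ) :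
    ∫⁻ X, ENNReal.ofReal ((N : ℝ)⁻¹ * ∑ i : Fin N, ‖interactionField n N φ X i‖ ^ 2)
      ∂(Measure.pi fun _ : Fin N => μ₀)
    = ENNReal.ofReal (((N : ℝ) - 1) / (N : ℝ) ^ 2 * E2 n μ₀ φ
        + ((N : ℝ) - 1) * ((N : ℝ) - 2) / (N : ℝ) ^ 2 * tripleCross n μ₀ φ) := by
  set π : Measure (Fin N → E') := Measure.pi fun _ : Fin N => μ₀ with hπ
  have hbig_eq : (fun X : Fin N → E' => (N : ℝ)⁻¹ * ∑ i, ‖interactionField n N φ X i‖ ^ 2)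
      = fun X => ∑ i : Fin N, ∑ j ∈ Finset.univ.erase i, ∑ k ∈ Finset.univ.erase i,
          ((N : ℝ)⁻¹ * ((N : ℝ)⁻¹) ^ 2) * trif n φ φ (X i, (X j, X k)) := by
    funext X
    simp_rw [interactionField_sq_expand X, Finset.mul_sum, mul_assoc]
  have hint : Integrable (fun X : Fin N → E' =>
      (N : ℝ)⁻¹ * ∑ i, ‖interactionField n N φ X i‖ ^ 2) π := by
    rw [hbig_eq]
    refine integrable_finset_sum _ fun i _ => integrable_finset_sum _ fun j _ =>
      integrable_finset_sum _ fun k _ => ?_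
    exact (trif_term_integrable hφ i j k).const_mul _
  have hnn : 0 ≤ᵐ[π] fun X : Fin N → E' =>
      (N : ℝ)⁻¹ * ∑ i, ‖interactionField n N φ X i‖ ^ 2 := by
    refine Filter.Eventually.of_forall fun X => ?_
    positivity
  rw [← ofReal_integral_eq_lintegral_ofReal hint hnn]
  congr 1
  rw [hbig_eq, integral_finset_sum _ fun i _ => integrable_finset_sum _ fun j _ =>
      integrable_finset_sum _ fun k _ => (trif_term_integrable hφ i j k).const_mul _]
  have hin : ∀ i : Fin N,
      ∫ X, (∑ j ∈ Finset.univ.erase i, ∑ k ∈ Finset.univ.erase i,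
        ((N : ℝ)⁻¹ * ((N : ℝ)⁻¹) ^ 2) * trif n φ φ (X i, (X j, X k))) ∂π
      = ((N : ℝ)⁻¹ * ((N : ℝ)⁻¹) ^ 2) * (((N : ℕ) - 1 : ℕ) * E2 n μ₀ φ
          + (((N : ℕ) - 1 : ℕ) * ((N : ℕ) - 2 : ℕ)) * tripleCross n μ₀ φ) := by
    intro i
    rw [integral_finset_sum _ fun j _ => integrable_finset_sum _ fun k _ =>
      (trif_term_integrable hφ i j k).const_mul _]
    have hrow : ∀ j ∈ Finset.univ.erase i,
        ∫ X, (∑ k ∈ Finset.univ.erase i,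
          ((N : ℝ)⁻¹ * ((N : ℝ)⁻¹) ^ 2) * trif n φ φ (X i, (X j, X k))) ∂π
        = ((N : ℝ)⁻¹ * ((N : ℝ)⁻¹) ^ 2) * (E2 n μ₀ φ
            + (((N : ℕ) - 2 : ℕ) : ℝ) * tripleCross n μ₀ φ) := by
      intro j hj
      have hij : i ≠ j := (Finset.ne_of_mem_erase hj).symm
      rw [integral_finset_sum _ fun k _ => (trif_term_integrable hφ i j k).const_mul _]
      have hsum : ∀ k ∈ Finset.univ.erase i,
          ∫ X, ((N : ℝ)⁻¹ * ((N : ℝ)⁻¹) ^ 2) * trif n φ φ (X i, (X j, X k)) ∂π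
          = ((N : ℝ)⁻¹ * ((N : ℝ)⁻¹) ^ 2) *
              (if k = j then E2 n μ₀ φ else tripleCross n μ₀ φ) := by
        intro k hk
        have hik : i ≠ k := (Finset.ne_of_mem_erase hk).symm
        rw [integral_const_mul]
        congr 1
        by_cases hkj : k = j
        · subst hkj
          rw [if_pos rfl]
          exact trif_diag_integral hφ hij
        · rw [if_neg hkj]
          exact trif_off_integral hφ hij hik (Ne.symm hkj)
      rw [Finset.sum_congr rfl hsum, ← Finset.mul_sum]
      congr 1
      rw [← Finset.add_sum_erase _ _ hj, if_pos rfl]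
      have hrest : ∑ k ∈ (Finset.univ.erase i).erase j,
          (if k = j then E2 n μ₀ φ else tripleCross n μ₀ φ)
          = (((N : ℕ) - 2 : ℕ) : ℝ) * tripleCross n μ₀ φ := by
        rw [Finset.sum_congr rfl fun k hk => if_neg (Finset.ne_of_mem_erase hk)]
        rw [Finset.sum_const, nsmul_eq_mul]
        congr 2
        rw [Finset.card_erase_of_mem hj, Finset.card_erase_of_mem (Finset.mem_univ _),
          Finset.card_univ, Fintype.card_fin]
        omega
      rw [hrest]
    rw [Finset.sum_congr rfl hrow, Finset.sum_const, nsmul_eq_mul,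
      Finset.card_erase_of_mem (Finset.mem_univ _), Finset.card_univ, Fintype.card_fin]
    push_cast [Nat.cast_sub (by omega : 1 ≤ N), Nat.cast_sub (by omega : 2 ≤ N)]
    ring
  rw [Finset.sum_congr rfl fun i _ => hin i, Finset.sum_const, nsmul_eq_mul,
    Finset.card_univ, Fintype.card_fin]
  push_cast [Nat.cast_sub (by omega : 1 ≤ N), Nat.cast_sub (by omega : 2 ≤ N)]
  have hN0 : (N : ℝ) ≠ 0 := by positivity
  field_simp

end

/-- improved coercivity on a compact hypothesis space `H` of continuous
kernels supported in `[0,R]`: the constant `c_H` (the infimum of the cross term over the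
unit sphere of `H`) is strictly positive and
`‖f_φ‖²_{L²(μ)} ≥ ((N−1)/N² + c_H (N−1)(N−2)/N²) ‖φ‖²_{L²(ρ)}` for all `φ ∈ H`. -/
theorem interactionField_coercivity_compact_subspace
    (n N : ℕ) (hn : 1 ≤ n) (hN : 3 ≤ N) (R : ℝ) (hR : 0 < R)
    (μ₀ : Measure (EuclideanSpace ℝ (Fin n))) [IsProbabilityMeasure μ₀]
    (hμ₀ : μ₀ ≪ volume)
    (μ : Measure (Fin N → EuclideanSpace ℝ (Fin n)))
    (hμ : μ = Measure.pi fun _ : Fin N => μ₀)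
    (H : Submodule ℝ (ℝ → ℝ))
    (hcont : ∀ φ ∈ H, Continuous φ)
    (hsupp : ∀ φ ∈ H, ∀ t : ℝ, φ t ≠ 0 → t ∈ Set.Icc (0 : ℝ) R)
    -- the unit ball of `H` is compact in the `L²(ρ)` norm (sequential compactness)
    (hcompact : ∀ u : ℕ → (ℝ → ℝ), (∀ k, u k ∈ H ∧ rhoNorm n N μ (u k) ≤ 1) →
      ∃ ψ ∈ H, ∃ s : ℕ → ℕ, StrictMono s ∧
        Tendsto (fun k => rhoNorm n N μ (u (s k) - ψ)) atTop (𝓝 0))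
    -- for every nonzero `φ ∈ H` there is `x ∈ supp μ₀` with strictly positive
    -- conditional cross term
    (hpos : ∀ φ ∈ H, φ ≠ 0 → ∃ x : EuclideanSpace ℝ (Fin n),
      (∀ U ∈ 𝓝 x, 0 < μ₀ U) ∧
      0 < ∫ p : EuclideanSpace ℝ (Fin n) × EuclideanSpace ℝ (Fin n),
          φ ‖x - p.1‖ * φ ‖x - p.2‖ * ⟪p.1 - x, p.2 - x⟫ ∂(μ₀.prod μ₀)) :
    ∃ c : ℝ, 0 < c ∧
      (∀ φ ∈ H, rhoNorm n N μ φ = 1 → c ≤ tripleCross n μ₀ φ) ∧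
      ∀ φ ∈ H,
        ∫⁻ X, ENNReal.ofReal
            ((N : ℝ)⁻¹ * ∑ i : Fin N, ‖interactionField n N φ X i‖ ^ 2) ∂μ ≥
          ENNReal.ofReal (((N : ℝ) - 1) / (N : ℝ) ^ 2 +
              c * (((N : ℝ) - 1) * ((N : ℝ) - 2) / (N : ℝ) ^ 2)) *
            rhoSqNorm n N μ φ := by
  classical
  subst hμ
  -- every member of H is admissible
  have hAdm : ∀ φ ∈ H, Adm φ := by
    intro φ hφ
    refine ⟨hcont φ hφ, ?_⟩
    obtain ⟨C, hC⟩ := (isCompact_Icc (a := (0:ℝ)) (b := R)).exists_bound_of_continuousOn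
      (hcont φ hφ).continuousOn
    refine ⟨max (C * R) 0, le_max_right _ _, fun t => ?_⟩
    by_cases h : φ t = 0
    · simpa [h] using le_max_right (C * R) 0
    · have ht := hsupp φ hφ t h
      have h1 : |φ t| ≤ C := by simpa [Real.norm_eq_abs] using hC t ht
      have h2 : |t| ≤ R := by rw [abs_of_nonneg ht.1]; exact ht.2
      refine le_trans ?_ (le_max_left _ _)
      exact mul_le_mul h1 h2 (abs_nonneg _) ((abs_nonneg _).trans h1)
  have hrho : ∀ φ ∈ H, rhoNorm n N (Measure.pi fun _ : Fin N => μ₀) φ = sqE n μ₀ φ :=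
    fun φ hφ => E2_eq_toReal_rhoSqNorm (by omega) (hAdm φ hφ)
  have hsqE0 : sqE n μ₀ (0 : ℝ → ℝ) = 0 := by
    have : E2 n μ₀ (0 : ℝ → ℝ) = 0 := by
      simp [E2, g2]
    rw [sqE, this, Real.sqrt_zero]
  -- main dichotomy: obtain the coercivity constant
  obtain ⟨c, hc_pos, hclause1, hGE⟩ : ∃ c : ℝ, 0 < c ∧
      (∀ φ ∈ H, rhoNorm n N (Measure.pi fun _ : Fin N => μ₀) φ = 1 →
        c ≤ tripleCross n μ₀ φ) ∧
      ∀ φ ∈ H, c * E2 n μ₀ φ ≤ tripleCross n μ₀ φ := by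
    by_cases hS : ∃ φ ∈ H, sqE n μ₀ φ = 1
    · -- the unit sphere is nonempty
      set A : Set ℝ := tripleCross n μ₀ '' {φ | φ ∈ H ∧ sqE n μ₀ φ = 1} with hA
      have hAne : A.Nonempty := by
        obtain ⟨φ, hφ, h1⟩ := hS
        exact ⟨tripleCross n μ₀ φ, ⟨φ, ⟨hφ, h1⟩, rfl⟩⟩
      have hAbdd : BddBelow A := by
        refine ⟨0, fun r hr => ?_⟩
        obtain ⟨φ, ⟨hφ, _⟩, rfl⟩ := hr
        exact tripleCross_nonneg (hAdm φ hφ)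
      set c := sInf A with hc
      have hc_le : ∀ φ ∈ H, sqE n μ₀ φ = 1 → c ≤ tripleCross n μ₀ φ := by
        intro φ hφ h1
        exact csInf_le hAbdd ⟨φ, ⟨hφ, h1⟩, rfl⟩
      have hc_nonneg : 0 ≤ c := by
        refine le_csInf hAne fun r hr => ?_
        obtain ⟨φ, ⟨hφ, _⟩, rfl⟩ := hr
        exact tripleCross_nonneg (hAdm φ hφ)
      have hc_pos : 0 < c := by
        rcases lt_or_eq_of_le hc_nonneg with h | h
        · exact h
        -- suppose c = 0; build a minimizing sequence
        exfalso
        have hcz : sInf A = 0 := h.symm ▸ rfl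
        have hmin : ∀ k : ℕ, ∃ φ, φ ∈ H ∧ sqE n μ₀ φ = 1 ∧
            tripleCross n μ₀ φ < 1 / (k + 1) := by
          intro k
          have hlt : sInf A < 1 / (k + 1 : ℝ) := by
            rw [hcz]; positivity
          obtain ⟨r, hr, hrk⟩ := exists_lt_of_csInf_lt hAne hlt
          obtain ⟨φ, ⟨hφ, h1⟩, rfl⟩ := hr
          exact ⟨φ, hφ, h1, hrk⟩
        choose u hu1 hu2 hu3 using hmin
        obtain ⟨ψ, hψH, s, hs, hconv⟩ := hcompact u (fun k => ⟨hu1 k, by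
          rw [hrho (u k) (hu1 k), hu2 k]⟩)
        -- translate convergence to sqE
        have hconv' : Tendsto (fun k => sqE n μ₀ (u (s k) - ψ)) atTop (𝓝 0) := by
          have : ∀ k, rhoNorm n N (Measure.pi fun _ : Fin N => μ₀) (u (s k) - ψ)
              = sqE n μ₀ (u (s k) - ψ) :=
            fun k => hrho _ (H.sub_mem (hu1 (s k)) hψH)
          simpa [this] using hconv
        -- the limit has unit norm
        have hψ1 : sqE n μ₀ ψ = 1 := by
          have hsq : Tendsto (fun k => |sqE n μ₀ (u (s k)) - sqE n μ₀ ψ|) atTop (𝓝 0) := by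
            refine squeeze_zero (fun k => abs_nonneg _) (fun k =>
              abs_sqE_sub_le (hAdm _ (hu1 (s k))) (hAdm _ hψH)) hconv'
          have h1 : Tendsto (fun _ : ℕ => |(1 : ℝ) - sqE n μ₀ ψ|) atTop (𝓝 0) := by
            refine hsq.congr fun k => ?_
            rw [hu2 (s k)]
          have h2 : |(1 : ℝ) - sqE n μ₀ ψ| = 0 :=
            tendsto_nhds_unique tendsto_const_nhds h1
          have := abs_eq_zero.mp h2
          linarith
        have hψ0 : ψ ≠ 0 := by
          intro hzero
          rw [hzero, hsqE0] at hψ1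
          norm_num at hψ1
        -- tripleCross converges to tripleCross ψ
        have hGconv : Tendsto (fun k => tripleCross n μ₀ (u (s k))) atTop
            (𝓝 (tripleCross n μ₀ ψ)) := by
          have hb : Tendsto (fun k => |tripleCross n μ₀ (u (s k)) - tripleCross n μ₀ ψ|)
              atTop (𝓝 0) := by
            have hbd : ∀ k, |tripleCross n μ₀ (u (s k)) - tripleCross n μ₀ ψ|
                ≤ sqE n μ₀ (u (s k) - ψ) * 2 := by
              intro k
              refine (tripleCross_diff_bound (hAdm _ (hu1 (s k))) (hAdm _ hψH)).trans ?_
              have := sqE_nonneg (n := n) (μ₀ := μ₀) (φ := u (s k) - ψ)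
              have h2 : sqE n μ₀ (u (s k)) + sqE n μ₀ ψ = 2 := by
                rw [hu2 (s k), hψ1]; norm_num
              rw [h2]
            refine squeeze_zero (fun k => abs_nonneg _) hbd ?_
            simpa using hconv'.mul_const 2
          rw [tendsto_iff_norm_sub_tendsto_zero]
          simpa [Real.norm_eq_abs] using hb
        -- but the sequence values tend to 0
        have hG0 : Tendsto (fun k => tripleCross n μ₀ (u (s k))) atTop (𝓝 0) := by
          refine squeeze_zero (fun k => tripleCross_nonneg (hAdm _ (hu1 (s k))))
            (fun k => le_of_lt ((hu3 (s k)).trans_le ?_)) tendsto_one_div_add_atTop_nhds_zero_nat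
          have hks : (k : ℝ) + 1 ≤ (s k : ℝ) + 1 := by
            have hsk : k ≤ s k := hs.le_apply
            have : (k : ℝ) ≤ (s k : ℝ) := by exact_mod_cast hsk
            linarith
          apply one_div_le_one_div_of_le (by positivity) hks
        have hGψ0 : tripleCross n μ₀ ψ = 0 := tendsto_nhds_unique hGconv hG0
        -- contradiction with positivity
        obtain ⟨x, hx, hK⟩ := hpos ψ hψH hψ0
        have := tripleCross_pos (hAdm ψ hψH) x hx hK
        rw [hGψ0] at this
        exact lt_irrefl 0 this
      refine ⟨c, hc_pos, ?_, ?_⟩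
      · intro φ hφ h1
        exact hc_le φ hφ (by rw [← hrho φ hφ]; exact h1)
      · intro φ hφ
        by_cases hz : sqE n μ₀ φ = 0
        · have hE : E2 n μ₀ φ = 0 := by
            have := sqE_sq (μ₀ := μ₀) (hAdm φ hφ)
            rw [hz] at this
            simpa using this.symm
          rw [hE, mul_zero]
          exact tripleCross_nonneg (hAdm φ hφ)
        · have ha : 0 < sqE n μ₀ φ := lt_of_le_of_ne sqE_nonneg (Ne.symm hz)
          set a := sqE n μ₀ φ with hadef
          have hψH' : (a⁻¹ • φ) ∈ H := H.smul_mem _ hφ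
          have h1 : sqE n μ₀ (a⁻¹ • φ) = 1 := by
            rw [sqE_smul, abs_of_pos (inv_pos.mpr ha), ← hadef, inv_mul_cancel₀ ha.ne']
          have h2 := hc_le _ hψH' h1
          rw [tripleCross_smul] at h2
          have h3 : c * a ^ 2 ≤ tripleCross n μ₀ φ := by
            have hA2 : (0:ℝ) < a ^ 2 := by positivity
            calc c * a ^ 2 ≤ ((a⁻¹) ^ 2 * tripleCross n μ₀ φ) * a ^ 2 := by
                  exact mul_le_mul_of_nonneg_right h2 hA2.le
              _ = tripleCross n μ₀ φ := by
                  field_simp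
          rw [hadef] at h3
          rwa [sqE_sq (μ₀ := μ₀) (hAdm φ hφ)] at h3
    · -- unit sphere empty: all of H is degenerate
      refine ⟨1, one_pos, ?_, ?_⟩
      · intro φ hφ h1
        exact absurd ⟨φ, hφ, by rw [← hrho φ hφ]; exact h1⟩ hS
      · intro φ hφ
        have hE : E2 n μ₀ φ = 0 := by
          by_contra hne
          have ha : 0 < sqE n μ₀ φ := by
            rw [sqE]
            exact Real.sqrt_pos.mpr (lt_of_le_of_ne E2_nonneg (Ne.symm hne))
          refine hS ⟨(sqE n μ₀ φ)⁻¹ • φ, H.smul_mem _ hφ, ?_⟩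
          rw [sqE_smul, abs_of_pos (inv_pos.mpr ha), inv_mul_cancel₀ ha.ne']
        rw [hE, mul_zero]
        exact tripleCross_nonneg (hAdm φ hφ)
  -- assemble the final statement
  refine ⟨c, hc_pos, hclause1, ?_⟩
  intro φ hφ
  rw [lint_expansion hN (hAdm φ hφ), rhoSqNorm_eq (by omega) (hAdm φ hφ)]
  have hN1 : (1:ℝ) ≤ (N:ℝ) := by exact_mod_cast (by omega : 1 ≤ N)
  have hN2 : (2:ℝ) ≤ (N:ℝ) := by exact_mod_cast (by omega : 2 ≤ N)
  have hcoeff : 0 ≤ ((N : ℝ) - 1) / (N : ℝ) ^ 2 +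
      c * (((N : ℝ) - 1) * ((N : ℝ) - 2) / (N : ℝ) ^ 2) := by
    have h1 : (0:ℝ) ≤ ((N : ℝ) - 1) / (N : ℝ) ^ 2 := by
      apply div_nonneg (by linarith) (by positivity)
    have h2 : (0:ℝ) ≤ ((N : ℝ) - 1) * ((N : ℝ) - 2) / (N : ℝ) ^ 2 := by
      apply div_nonneg (by nlinarith) (by positivity)
    nlinarith [hc_pos.le]
  rw [← ENNReal.ofReal_mul hcoeff]
  refine ENNReal.ofReal_le_ofReal ?_
  have hGφ := hGE φ hφ
  have hE2 := E2_nonneg (n := n) (μ₀ := μ₀) (φ := φ)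
  have hB : (0:ℝ) ≤ ((N : ℝ) - 1) * ((N : ℝ) - 2) / (N : ℝ) ^ 2 := by
    apply div_nonneg (by nlinarith) (by positivity)
  nlinarith [mul_le_mul_of_nonneg_left hGφ hB]
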